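/- Let κ₁, κ₂ ∈ ℝ and let G = diag(1, κ₁, κ₁κ₂) be the 3×3 diagonal matrix of the metric ds² = dy² + κ₁dt² + κ₁κ₂dx². Then for every α, β, θ ∈ ℝ, each of the matrices M₁ = [[C_{κ₁}(α), −κ₁S_{κ₁}(α), 0], [S_{κ₁}(α), C_{κ₁}(α), 0], [0, 0, 1]], M₂ = [[C_{κ₁κ₂}(β), 0, −κ₁κ₂S_{κ₁κ₂}(β)], [0, 1, 0], [S_{κ₁κ₂}(β), 0, C_{κ₁κ₂}(β)]], and M₃ = [[1, 0, 0], [0, C_{κ₂}(θ), −κ₂S_{κ₂}(θ)], [0, S_{κ₂}(θ), C_{κ₂}(θ)]] satisfies Mᵀ·G·M = G, i.e. the one-parameter subgroups generated by H, P, K act by isometries of the (possibly indefinite or degenerate) metric G. -/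

import Mathlib

open Matrix
/-- The generalized cosine `C_κ`. -/
noncomputable def Ck (κ φ : ℝ) : ℝ :=
  if 0 < κ then Real.cos (Real.sqrt κ * φ)
  else if κ = 0 then 1
  else Real.cosh (Real.sqrt (-κ) * φ)

/-- The generalized sine `S_κ`. -/
noncomputable def Sk (κ φ : ℝ) : ℝ :=
  if 0 < κ then Real.sin (Real.sqrt κ * φ) / Real.sqrt κ
  else if κ = 0 then φ
  else Real.sinh (Real.sqrt (-κ) * φ) / Real.sqrt (-κ)

lemma Ck_sq_add (κ φ : ℝ) : (Ck κ φ)^2 + κ * (Sk κ φ)^2 = 1 := by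
  unfold Ck Sk
  rcases lt_trichotomy κ 0 with h | h | h
  · rw [if_neg (not_lt.2 h.le), if_neg (not_lt.2 h.le), if_neg h.ne, if_neg h.ne]
    have hne : Real.sqrt (-κ) ≠ 0 := ne_of_gt (Real.sqrt_pos.2 (by linarith))
    have hs : Real.sqrt (-κ) ^ 2 = -κ := Real.sq_sqrt (by linarith)
    have ht := Real.cosh_sq_sub_sinh_sq (Real.sqrt (-κ) * φ)
    field_simp
    nlinarith [ht]
  · simp [h]
  · rw [if_pos h, if_pos h]
    have hne : Real.sqrt κ ≠ 0 := ne_of_gt (Real.sqrt_pos.2 h)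
    have hs : Real.sqrt κ ^ 2 = κ := Real.sq_sqrt h.le
    have ht := Real.sin_sq_add_cos_sq (Real.sqrt κ * φ)
    field_simp
    linear_combination κ * ht + (Real.cos (Real.sqrt κ * φ) ^ 2 - 1) * hs

set_option maxHeartbeats 1000000 in
/-- The one-parameter subgroups generated by `H`, `P`, `K` act by isometries of the
(possibly indefinite or degenerate) metric `G = diag(1, κ₁, κ₁κ₂)`:
`Mᵀ G M = G` for each of the three families of matrices. -/
theorem one_parameter_subgroups_are_isometries (κ₁ κ₂ α β θ : ℝ) :
    let G : Matrix (Fin 3) (Fin 3) ℝ := Matrix.diagonal ![1, κ₁, κ₁ * κ₂]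
    let M₁ : Matrix (Fin 3) (Fin 3) ℝ :=
      !![Ck κ₁ α, -κ₁ * Sk κ₁ α, 0; Sk κ₁ α, Ck κ₁ α, 0; 0, 0, 1]
    let M₂ : Matrix (Fin 3) (Fin 3) ℝ :=
      !![Ck (κ₁ * κ₂) β, 0, -(κ₁ * κ₂) * Sk (κ₁ * κ₂) β; 0, 1, 0;
        Sk (κ₁ * κ₂) β, 0, Ck (κ₁ * κ₂) β]
    let M₃ : Matrix (Fin 3) (Fin 3) ℝ :=
      !![1, 0, 0; 0, Ck κ₂ θ, -κ₂ * Sk κ₂ θ; 0, Sk κ₂ θ, Ck κ₂ θ]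
    M₁ᵀ * G * M₁ = G ∧ M₂ᵀ * G * M₂ = G ∧ M₃ᵀ * G * M₃ = G := by
  intro G M₁ M₂ M₃
  have h1 := Ck_sq_add κ₁ α
  have h2 := Ck_sq_add (κ₁ * κ₂) β
  have h3 := Ck_sq_add κ₂ θ
  have eG : G = !![1, 0, 0; 0, κ₁, 0; 0, 0, κ₁ * κ₂] := by
    ext i j
    fin_cases i <;> fin_cases j <;>
      simp [G, Matrix.diagonal, Matrix.vecHead, Matrix.vecTail]
  have e1 : M₁ᵀ = !![Ck κ₁ α, Sk κ₁ α, 0; -κ₁ * Sk κ₁ α, Ck κ₁ α, 0; 0, 0, 1] := by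
    ext i j; fin_cases i <;> fin_cases j <;> rfl
  have e2 : M₂ᵀ = !![Ck (κ₁ * κ₂) β, 0, Sk (κ₁ * κ₂) β; 0, 1, 0;
      -(κ₁ * κ₂) * Sk (κ₁ * κ₂) β, 0, Ck (κ₁ * κ₂) β] := by
    ext i j; fin_cases i <;> fin_cases j <;> rfl
  have e3 : M₃ᵀ = !![1, 0, 0; 0, Ck κ₂ θ, Sk κ₂ θ; 0, -κ₂ * Sk κ₂ θ, Ck κ₂ θ] := by
    ext i j; fin_cases i <;> fin_cases j <;> rfl
  refine ⟨?_, ?_, ?_⟩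
  · rw [e1, eG]
    ext i j
    fin_cases i <;> fin_cases j <;>
      simp [M₁, Matrix.mul_apply, Fin.sum_univ_three, Matrix.vecHead, Matrix.vecTail] <;>
      first
        | ring1
        | linear_combination h1
        | linear_combination κ₁ * h1
  · rw [e2, eG]
    ext i j
    fin_cases i <;> fin_cases j <;>
      simp [M₂, Matrix.mul_apply, Fin.sum_univ_three, Matrix.vecHead, Matrix.vecTail] <;>
      first
        | ring1
        | linear_combination h2
        | linear_combination κ₁ * κ₂ * h2
  · rw [e3, eG]
    ext i j
    fin_cases i <;> fin_cases j <;>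
      simp [M₃, Matrix.mul_apply, Fin.sum_univ_three, Matrix.vecHead, Matrix.vecTail] <;>
      first
        | ring1
        | linear_combination κ₁ * h3
        | linear_combination κ₁ * κ₂ * h3
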